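/- arXiv:1703.10357 — 4 statements merged into one kernel-verified Lean document; each statement's English description precedes it below -/
import Mathlib

section
/- Let T be a Zamfirescu mapping on a metric space X, i.e., there exist real numbers a ∈ (0,1) and b, c ∈ (0, 1/2) such that for all x, y ∈ X at least one of the following holds: (z1) d(Tx,Ty) ≤ a·d(x,y); (z2) d(Tx,Ty) ≤ b·(d(x,Tx) + d(y,Ty)); (z3) d(Tx,Ty) ≤ c·(d(x,Ty) + d(y,Tx)). Then, with δ = max{a, b/(1-b), c/(1-c)}, we have δ ∈ [0,1) and for all x, y ∈ X, d(Tx,Ty) ≤ δ·d(x,y) + 2δ·d(x,Tx). -/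
theorem stmt_1 {X : Type*} [MetricSpace X] (T : X → X) (a b c : ℝ)
    (ha : a ∈ Set.Ioo (0:ℝ) 1) (hb : b ∈ Set.Ioo (0:ℝ) (1/2)) (hc : c ∈ Set.Ioo (0:ℝ) (1/2))
    (hz : ∀ x y : X,
      dist (T x) (T y) ≤ a * dist x y ∨
      dist (T x) (T y) ≤ b * (dist x (T x) + dist y (T y)) ∨
      dist (T x) (T y) ≤ c * (dist x (T y) + dist y (T x)))
    (δ : ℝ) (hδ : δ = max a (max (b / (1 - b)) (c / (1 - c)))) :
    δ ∈ Set.Ico (0:ℝ) 1 ∧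
      ∀ x y : X, dist (T x) (T y) ≤ δ * dist x y + 2 * δ * dist x (T x) := by
  obtain ⟨ha0, ha1⟩ := ha
  obtain ⟨hb0, hb1⟩ := hb
  obtain ⟨hc0, hc1⟩ := hc
  have hb1' : (0:ℝ) < 1 - b := by linarith
  have hc1' : (0:ℝ) < 1 - c := by linarith
  have hbd : b / (1 - b) < 1 := by rw [div_lt_one hb1']; linarith
  have hcd : c / (1 - c) < 1 := by rw [div_lt_one hc1']; linarith
  have hbd0 : 0 ≤ b / (1 - b) := by positivity
  have hcd0 : 0 ≤ c / (1 - c) := by positivity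
  have hδ0 : 0 ≤ δ := by rw [hδ]; exact le_trans ha0.le (le_max_left _ _)
  have hδ1 : δ < 1 := by rw [hδ]; simp [ha1, hbd, hcd]
  have hab : a ≤ δ := hδ ▸ le_max_left _ _
  have hbb : b / (1 - b) ≤ δ := hδ ▸ le_trans (le_max_left _ _) (le_max_right _ _)
  have hcb : c / (1 - c) ≤ δ := hδ ▸ le_trans (le_max_right _ _) (le_max_right _ _)
  refine ⟨⟨hδ0, hδ1⟩, fun x y => ?_⟩
  have d1 : 0 ≤ dist x y := dist_nonneg
  have d2 : 0 ≤ dist x (T x) := dist_nonneg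
  rcases hz x y with h | h | h
  · calc dist (T x) (T y) ≤ a * dist x y := h
      _ ≤ δ * dist x y := by nlinarith
      _ ≤ δ * dist x y + 2 * δ * dist x (T x) := by nlinarith
  · have tri : dist y (T y) ≤ dist y x + dist x (T x) + dist (T x) (T y) :=
      (dist_triangle4 y x (T x) (T y))
    have hyx : dist y x = dist x y := dist_comm y x
    have key : dist (T x) (T y) ≤ (b / (1 - b)) * dist x y + 2 * (b / (1 - b)) * dist x (T x) := by
      have e : b / (1 - b) * (1 - b) = b := div_mul_cancel₀ _ hb1'.ne'
      nlinarith
    calc dist (T x) (T y) ≤ (b / (1 - b)) * dist x y + 2 * (b / (1 - b)) * dist x (T x) := key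
      _ ≤ δ * dist x y + 2 * δ * dist x (T x) := by nlinarith
  · have t1 : dist x (T y) ≤ dist x (T x) + dist (T x) (T y) := dist_triangle _ _ _
    have t2 : dist y (T x) ≤ dist y x + dist x (T x) := dist_triangle _ _ _
    have hyx : dist y x = dist x y := dist_comm y x
    have key : dist (T x) (T y) ≤ (c / (1 - c)) * dist x y + 2 * (c / (1 - c)) * dist x (T x) := by
      have e : c / (1 - c) * (1 - c) = c := div_mul_cancel₀ _ hc1'.ne'
      nlinarith
    calc dist (T x) (T y) ≤ (c / (1 - c)) * dist x y + 2 * (c / (1 - c)) * dist x (T x) := key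
      _ ≤ δ * dist x y + 2 * δ * dist x (T x) := by nlinarith
end

section
/- For δ ∈ [0,1) and α, β ∈ [0,1], one has α·δ / (1 - (1-α)δ[β + (1-β)δ]) ≤ 1 - (1-α)(1-δ), where the denominator is positive. -/
theorem stmt_7 (δ α β : ℝ) (hδ : δ ∈ Set.Ico (0:ℝ) 1)
    (hα : α ∈ Set.Icc (0:ℝ) 1) (hβ : β ∈ Set.Icc (0:ℝ) 1) :
    0 < 1 - (1 - α) * δ * (β + (1 - β) * δ) ∧
      α * δ / (1 - (1 - α) * δ * (β + (1 - β) * δ)) ≤ 1 - (1 - α) * (1 - δ) := by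
  obtain ⟨h1, h2⟩ := hδ
  obtain ⟨h3, h4⟩ := hα
  obtain ⟨h5, h6⟩ := hβ
  have hS : 0 ≤ β + (1 - β) * δ := by nlinarith
  have hpos : 0 < 1 - (1 - α) * δ * (β + (1 - β) * δ) := by
    nlinarith [mul_nonneg (mul_nonneg h3 h1) hS, mul_nonneg h1 (mul_nonneg (sub_nonneg.2 h6) (sub_nonneg.2 h2.le))]
  refine ⟨hpos, ?_⟩
  rw [div_le_iff₀ hpos]
  nlinarith [mul_nonneg (sub_nonneg.2 h2.le) h3,
    mul_nonneg (mul_nonneg (sub_nonneg.2 h2.le) (mul_nonneg (sub_nonneg.2 h4) (sub_nonneg.2 h6))) h1,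
    mul_nonneg (mul_nonneg (sub_nonneg.2 h2.le) (mul_nonneg (sub_nonneg.2 h4) (sub_nonneg.2 h4))) (mul_nonneg h1 hS)]
end

section
/- Let T be a contractive-like mapping with constant δ ∈ [0,1) on a nonempty closed convex subset E of a W-hyperbolic space, with a fixed point p. If the sequence {x_n} satisfies the implicit S-iteration x_n = W(Tx_{n-1}, Ty_n, α_n), y_n = W(x_n, Tx_n, β_n) with α_n, β_n ∈ [0,1] and ∑ (1 - α_n) = ∞, then x_n → p. -/
/-- A W-hyperbolic space structure (Kohlenbach) on a metric space. -/
structure WHyperbolic (X : Type*) [MetricSpace X] where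
  W : X → X → ℝ → X
  w1 : ∀ (u x y : X) (α : ℝ), α ∈ Set.Icc (0:ℝ) 1 →
    dist u (W x y α) ≤ (1 - α) * dist u x + α * dist u y
  w2 : ∀ (x y : X) (α β : ℝ), α ∈ Set.Icc (0:ℝ) 1 → β ∈ Set.Icc (0:ℝ) 1 →
    dist (W x y α) (W x y β) = |α - β| * dist x y
  w3 : ∀ (x y : X) (α : ℝ), α ∈ Set.Icc (0:ℝ) 1 → W x y α = W y x (1 - α)
  w4 : ∀ (x y z w : X) (α : ℝ), α ∈ Set.Icc (0:ℝ) 1 →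
    dist (W x z α) (W y w α) ≤ (1 - α) * dist x y + α * dist z w

open Filter

theorem stmt_8 {X : Type*} [MetricSpace X] (H : WHyperbolic X)
    (E : Set X) (hE : E.Nonempty) (hEclosed : IsClosed E)
    (hEconvex : ∀ x ∈ E, ∀ y ∈ E, ∀ α ∈ Set.Icc (0:ℝ) 1, H.W x y α ∈ E)
    (T : X → X) (hTE : ∀ x ∈ E, T x ∈ E)
    (δ : ℝ) (hδ : δ ∈ Set.Ico (0:ℝ) 1) (φ : ℝ → ℝ)
    (hφmono : StrictMonoOn φ (Set.Ici 0)) (hφcont : ContinuousOn φ (Set.Ici 0))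
    (hφ0 : φ 0 = 0) (hφnonneg : ∀ t, 0 ≤ t → 0 ≤ φ t)
    (hT : ∀ x ∈ E, ∀ y ∈ E, dist (T x) (T y) ≤ δ * dist x y + φ (dist x (T x)))
    (p : X) (hpE : p ∈ E) (hp : T p = p)
    (α β : ℕ → ℝ) (hα : ∀ n, α n ∈ Set.Icc (0:ℝ) 1) (hβ : ∀ n, β n ∈ Set.Icc (0:ℝ) 1)
    (hαdiv : Tendsto (fun N => ∑ n ∈ Finset.range N, (1 - α n)) atTop atTop)
    (x y : ℕ → X) (hxE : ∀ n, x n ∈ E) (hyE : ∀ n, y n ∈ E)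
    (hx : ∀ n ≥ 1, x n = H.W (T (x (n - 1))) (T (y n)) (α n))
    (hy : ∀ n ≥ 1, y n = H.W (x n) (T (x n)) (β n)) :
    Tendsto x atTop (nhds p) := by
  obtain ⟨hδ0, hδ1⟩ := hδ
  have hTp : ∀ z ∈ E, dist (T z) p ≤ δ * dist z p := by
    intro z hz
    have h := hT p hpE z hz
    rw [hp] at h
    simpa [dist_comm, hφ0] using h
  have key : ∀ n ≥ 1, dist (x n) p ≤ δ * dist (x (n - 1)) p := by
    intro n hn
    obtain ⟨hα0, hα1⟩ := hα n
    obtain ⟨hβ0, hβ1⟩ := hβ n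
    have ha : (0:ℝ) ≤ dist (x (n-1)) p := dist_nonneg
    have hb : (0:ℝ) ≤ dist (x n) p := dist_nonneg
    have hyn : dist p (y n) ≤ dist (x n) p := by
      have h1 := H.w1 p (x n) (T (x n)) (β n) ⟨hβ0, hβ1⟩
      rw [← hy n hn] at h1
      have h2 : dist p (T (x n)) ≤ δ * dist (x n) p := by
        rw [dist_comm]; exact hTp _ (hxE n)
      rw [dist_comm p (x n)] at h1
      nlinarith [mul_le_mul_of_nonneg_left h2 hβ0,
        mul_nonneg (mul_nonneg hβ0 hb) (sub_nonneg.mpr hδ1.le)]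
    have h1 := H.w1 p (T (x (n-1))) (T (y n)) (α n) ⟨hα0, hα1⟩
    rw [← hx n hn] at h1
    have h2 : dist p (T (x (n-1))) ≤ δ * dist (x (n-1)) p := by
      rw [dist_comm]; exact hTp _ (hxE (n-1))
    have h3 : dist p (T (y n)) ≤ δ * dist (x n) p := by
      rw [dist_comm]
      calc dist (T (y n)) p ≤ δ * dist (y n) p := hTp _ (hyE n)
        _ ≤ δ * dist (x n) p := by
            apply mul_le_mul_of_nonneg_left _ hδ0
            rw [dist_comm]; exact hyn
    rw [dist_comm p (x n)] at h1
    have h4 : dist (x n) p ≤ (1 - α n) * (δ * dist (x (n-1)) p)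
        + α n * (δ * dist (x n) p) := by
      have e2 := mul_le_mul_of_nonneg_left h2 (sub_nonneg.mpr hα1)
      have e3 := mul_le_mul_of_nonneg_left h3 hα0
      linarith
    have hpos : (0:ℝ) < 1 - α n * δ := by nlinarith
    have h5 : dist (x n) p * (1 - α n * δ) ≤ (δ * dist (x (n-1)) p) * (1 - α n * δ) := by
      nlinarith [h4, mul_nonneg (mul_nonneg (mul_nonneg hα0 hδ0) ha) (sub_nonneg.mpr hδ1.le)]
    exact le_of_mul_le_mul_right h5 hpos
  have bound : ∀ n, dist (x n) p ≤ δ ^ n * dist (x 0) p := by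
    intro n
    induction n with
    | zero => simp
    | succ n ih =>
        have hk := key (n+1) (Nat.le_add_left 1 n)
        simp only [Nat.add_sub_cancel] at hk
        calc dist (x (n+1)) p ≤ δ * dist (x n) p := hk
          _ ≤ δ * (δ ^ n * dist (x 0) p) := mul_le_mul_of_nonneg_left ih hδ0
          _ = δ ^ (n+1) * dist (x 0) p := by ring
  rw [tendsto_iff_dist_tendsto_zero]
  apply squeeze_zero (fun n => dist_nonneg) bound
  have := (tendsto_pow_atTop_nhds_zero_of_lt_one hδ0 hδ1).mul_const (dist (x 0) p)
  simpa using this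
end

section
/- Fix δ ∈ (0,1) and sequences α_n = 1 - 1/n, β_n = 1 - 1/n for n ≥ 2. Let a_n = (α_n δ / (1 - (1-α_n)δ[β_n + (1-β_n)δ]))^n · C and b_n = (α_n / (1 - (1-α_n)δ))^n · C for a constant C > 0. Then a_n / b_n → 0 as n → ∞. -/
open Filter

theorem stmt_11 (δ C : ℝ) (hδ : δ ∈ Set.Ioo (0:ℝ) 1) (hC : 0 < C)
    (α β a b : ℕ → ℝ)
    (hα : ∀ n ≥ 2, α n = 1 - 1 / (n : ℝ))
    (hβ : ∀ n ≥ 2, β n = 1 - 1 / (n : ℝ))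
    (ha : ∀ n ≥ 2, a n =
      (α n * δ / (1 - (1 - α n) * δ * (β n + (1 - β n) * δ))) ^ n * C)
    (hb : ∀ n ≥ 2, b n = (α n / (1 - (1 - α n) * δ)) ^ n * C) :
    Tendsto (fun n => a n / b n) atTop (nhds 0) := by
  obtain ⟨hδ0, hδ1⟩ := hδ
  set c : ℝ := (1 + δ) / 2 with hc
  have hc1 : c < 1 := by rw [hc]; linarith
  have hc0 : 0 < c := by rw [hc]; linarith
  set r : ℕ → ℝ := fun n =>
    δ * (1 - δ / n) / (1 - δ / n * (1 - 1 / n + δ / n)) with hr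
  have hrlim : Tendsto r atTop (nhds δ) := by
    have h1 : Tendsto (fun n : ℕ => δ / (n : ℝ)) atTop (nhds 0) :=
      tendsto_const_div_atTop_nhds_zero_nat δ
    have h2 : Tendsto (fun n : ℕ => 1 / (n : ℝ)) atTop (nhds 0) :=
      tendsto_one_div_atTop_nhds_zero_nat
    have hnum : Tendsto (fun n : ℕ => δ * (1 - δ / n)) atTop
        (nhds (δ * (1 - 0))) := tendsto_const_nhds.mul (tendsto_const_nhds.sub h1)
    have hden : Tendsto (fun n : ℕ => 1 - δ / n * (1 - 1 / n + δ / n)) atTop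
        (nhds (1 - 0 * (1 - 0 + 0))) :=
      tendsto_const_nhds.sub (h1.mul ((tendsto_const_nhds.sub h2).add h1))
    have := hnum.div hden (by norm_num)
    simpa [hr, Pi.div_def] using this
  have habs : Tendsto (fun n => |r n|) atTop (nhds δ) := by
    have := hrlim.abs
    rwa [abs_of_pos hδ0] at this
  have hev : ∀ᶠ n in atTop, |r n| ≤ c :=
    habs.eventually (eventually_le_nhds (by rw [hc]; linarith))
  have heq : ∀ᶠ n : ℕ in atTop, a n / b n = r n ^ n := by
    filter_upwards [eventually_ge_atTop 2] with n hn
    have hn2 : (2:ℝ) ≤ n := by exact_mod_cast hn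
    have hn0 : (0:ℝ) < n := by linarith
    rw [ha n hn, hb n hn, hα n hn, hβ n hn]
    simp only [hr]
    rw [show δ / (n:ℝ) = δ * (1 / (n:ℝ)) from by ring,
      show (1:ℝ) - (1 - 1 / (n:ℝ)) = 1 / (n:ℝ) from by ring]
    set x : ℝ := 1 / (n:ℝ) with hxdef
    have hx0 : 0 < x := by rw [hxdef]; positivity
    have hx2 : x ≤ 1 / 2 := by
      rw [hxdef]
      apply one_div_le_one_div_of_le <;> linarith
    have hα0 : (0:ℝ) < 1 - x := by linarith
    have h3 : δ * x ≤ x := by nlinarith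
    have h4 : (0:ℝ) ≤ δ * x := by positivity
    have hD2 : (0:ℝ) < 1 - x * δ := by nlinarith
    have hD1 : (0:ℝ) < 1 - x * δ * ((1 - x) + x * δ) := by
      nlinarith [mul_nonneg h4 (by linarith : (0:ℝ) ≤ x - δ * x)]
    have hD1' : (0:ℝ) < 1 - δ * x * (1 - x + δ * x) := by
      nlinarith [mul_nonneg h4 (by linarith : (0:ℝ) ≤ x - δ * x)]
    rw [mul_div_mul_right _ _ (ne_of_gt hC), ← div_pow]
    congr 1
    field_simp [ne_of_gt hα0, ne_of_gt hD1, ne_of_gt hD2, ne_of_gt hD1']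
  have hgeo : Tendsto (fun n : ℕ => c ^ n) atTop (nhds 0) :=
    tendsto_pow_atTop_nhds_zero_of_lt_one hc0.le hc1
  apply squeeze_zero_norm' _ hgeo
  filter_upwards [heq, hev] with n h1 h2
  rw [h1, Real.norm_eq_abs, abs_pow]
  exact pow_le_pow_left₀ (abs_nonneg _) h2 n
end
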